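/- Under the conditions of the previous statement and additionally ‖∇ℓ(w)‖ ≥ 2Lρ, the averaged-gradient descent step decreases the loss: ℓ(w − η g) ≤ ℓ(w) − η‖∇ℓ(w)‖²/4 for any step size 0 < η ≤ 1/(2L). -/

import Mathlib

open scoped RealInnerProductSpace

lemma descent_aux {k : ℕ} (ℓ : EuclideanSpace ℝ (Fin k) → ℝ) (hdiff : Differentiable ℝ ℓ)
    (Lc : ℝ) (hLc : 0 ≤ Lc) (hlip : LipschitzWith Lc.toNNReal (gradient ℓ))
    (x v : EuclideanSpace ℝ (Fin k)) :
    ℓ (x - v) ≤ ℓ x - ⟪gradient ℓ x, v⟫ + Lc / 2 * ‖v‖ ^ 2 := by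
  set φ : ℝ → ℝ := fun t => ℓ (x - t • v) + t * ⟪gradient ℓ x, v⟫ - Lc / 2 * t ^ 2 * ‖v‖ ^ 2
    with hφdef
  have hc : ∀ t : ℝ, HasDerivAt (fun t : ℝ => x - t • v) (-v) t := by
    intro t
    have := ((hasDerivAt_id t).smul_const v).const_sub x
    simpa using this
  have hℓ' : ∀ t : ℝ, HasDerivAt (fun t : ℝ => ℓ (x - t • v))
      (-⟪gradient ℓ (x - t • v), v⟫) t := by
    intro t
    have h1 := ((hdiff (x - t • v)).hasGradientAt.hasFDerivAt).comp_hasDerivAt t (hc t)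
    simpa [InnerProductSpace.toDual_apply_apply, inner_neg_right, Function.comp_def] using h1
  have hφ : ∀ t : ℝ, HasDerivAt φ
      (-⟪gradient ℓ (x - t • v), v⟫ + ⟪gradient ℓ x, v⟫ - Lc / 2 * (2 * t) * ‖v‖ ^ 2) t := by
    intro t
    have h2 : HasDerivAt (fun t : ℝ => t * ⟪gradient ℓ x, v⟫) ⟪gradient ℓ x, v⟫ t := by
      simpa using (hasDerivAt_id t).mul_const ⟪gradient ℓ x, v⟫
    have h3 : HasDerivAt (fun t : ℝ => Lc / 2 * t ^ 2 * ‖v‖ ^ 2)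
        (Lc / 2 * (2 * t) * ‖v‖ ^ 2) t := by
      have := ((hasDerivAt_pow 2 t).const_mul (Lc / 2)).mul_const (‖v‖ ^ 2)
      simpa [mul_comm, mul_assoc, mul_left_comm] using this
    exact ((hℓ' t).add h2).sub h3
  have key : φ 1 ≤ φ 0 := by
    have hanti := antitoneOn_of_deriv_nonpos (convex_Icc (0:ℝ) 1)
      (fun t _ => ((hφ t).continuousAt).continuousWithinAt)
      (fun t _ => ((hφ t).differentiableAt).differentiableWithinAt)
      (fun t ht => by
        rw [(hφ t).deriv]
        rw [interior_Icc] at ht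
        have hlipb : ‖gradient ℓ x - gradient ℓ (x - t • v)‖ ≤ Lc * (t * ‖v‖) := by
          have := hlip.dist_le_mul x (x - t • v)
          simp only [dist_eq_norm] at this
          have h4 : ‖x - (x - t • v)‖ = t * ‖v‖ := by
            rw [sub_sub_cancel, norm_smul, Real.norm_eq_abs, abs_of_pos ht.1]
          rw [h4] at this
          rwa [Real.coe_toNNReal Lc hLc] at this
        have hin : ⟪gradient ℓ x - gradient ℓ (x - t • v), v⟫ ≤ Lc * (t * ‖v‖) * ‖v‖ :=
          le_trans (real_inner_le_norm _ _) (by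
            have := mul_le_mul_of_nonneg_right hlipb (norm_nonneg v)
            linarith)
        have hin2 : -⟪gradient ℓ (x - t • v), v⟫ + ⟪gradient ℓ x, v⟫ ≤ Lc * t * ‖v‖ ^ 2 := by
          rw [inner_sub_left] at hin
          nlinarith [hin]
        nlinarith [hin2])
    exact hanti (Set.mem_Icc.2 ⟨le_refl 0, zero_le_one⟩)
      (Set.mem_Icc.2 ⟨zero_le_one, le_refl 1⟩) zero_le_one
  simp only [hφdef, one_smul, zero_smul, sub_zero, one_mul, one_pow, zero_mul, mul_zero,
    zero_pow, add_zero] at key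
  linarith [key]

theorem stmt_7 {k : ℕ} (ℓ : EuclideanSpace ℝ (Fin k) → ℝ) (hdiff : Differentiable ℝ ℓ)
    (Lc : ℝ) (hLc : 0 < Lc) (hlip : LipschitzWith Lc.toNNReal (gradient ℓ))
    (N : ℕ) (hN : 0 < N) (w : EuclideanSpace ℝ (Fin k))
    (ws : Fin N → EuclideanSpace ℝ (Fin k)) (ρ : ℝ) (hρ : 0 ≤ ρ)
    (hws : ∀ n, ‖ws n - w‖ ≤ ρ)
    (g : EuclideanSpace ℝ (Fin k))
    (hg : g = (N : ℝ)⁻¹ • ∑ n, gradient ℓ (ws n))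
    (hbig : 2 * Lc * ρ ≤ ‖gradient ℓ w‖)
    (η : ℝ) (hη0 : 0 < η) (hη1 : η ≤ 1 / (2 * Lc)) :
    ℓ (w - η • g) ≤ ℓ w - η * ‖gradient ℓ w‖ ^ 2 / 4 := by
  set G := gradient ℓ w with hG
  set e := g - G with he
  -- bound on the error
  have herr : ‖e‖ ≤ Lc * ρ := by
    have hGsum : G = (N : ℝ)⁻¹ • ∑ _n : Fin N, G := by
      rw [Finset.sum_const, Finset.card_univ, Fintype.card_fin, ← Nat.cast_smul_eq_nsmul ℝ,
        smul_smul, inv_mul_cancel₀ (by exact_mod_cast hN.ne' : (N:ℝ) ≠ 0), one_smul]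
    have : e = (N : ℝ)⁻¹ • ∑ n, (gradient ℓ (ws n) - G) := by
      rw [he, hg]
      rw [Finset.sum_sub_distrib, smul_sub, ← hGsum]
    rw [this, norm_smul]
    have hbound : ‖∑ n, (gradient ℓ (ws n) - G)‖ ≤ (N : ℝ) * (Lc * ρ) := by
      refine le_trans (norm_sum_le _ _) ?_
      have : ∀ n : Fin N, ‖gradient ℓ (ws n) - G‖ ≤ Lc * ρ := by
        intro n
        have h1 := hlip.dist_le_mul (ws n) w
        rw [dist_eq_norm, Real.coe_toNNReal Lc hLc.le] at h1
        exact le_trans h1 (mul_le_mul_of_nonneg_left (hws n) hLc.le)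
      calc ∑ n, ‖gradient ℓ (ws n) - G‖ ≤ ∑ _n : Fin N, (Lc * ρ) :=
            Finset.sum_le_sum (fun n _ => this n)
        _ = (N : ℝ) * (Lc * ρ) := by
            rw [Finset.sum_const, Finset.card_univ, Fintype.card_fin, nsmul_eq_mul]
    have hNpos : (0:ℝ) < N := by exact_mod_cast hN
    calc ‖(N : ℝ)⁻¹‖ * ‖∑ n, (gradient ℓ (ws n) - G)‖
        ≤ (N:ℝ)⁻¹ * ((N : ℝ) * (Lc * ρ)) := by
          rw [Real.norm_eq_abs, abs_of_pos (inv_pos.2 hNpos)]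
          exact mul_le_mul_of_nonneg_left hbound (inv_pos.2 hNpos).le
      _ = Lc * ρ := by field_simp
  -- descent lemma
  have hdesc := descent_aux ℓ hdiff Lc hLc.le hlip w (η • g)
  rw [real_inner_smul_right, norm_smul, Real.norm_eq_abs, abs_of_pos hη0] at hdesc
  -- algebra
  have hgGe : g = G + e := by rw [he]; abel
  have hinner : ⟪G, g⟫ = ‖G‖ ^ 2 + ⟪G, e⟫ := by
    rw [hgGe, inner_add_right, real_inner_self_eq_norm_sq]
  have hnormg : ‖g‖ ^ 2 = ‖G‖ ^ 2 + 2 * ⟪G, e⟫ + ‖e‖ ^ 2 := by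
    rw [hgGe, @norm_add_sq_real]
  have hp : -(‖G‖ * ‖e‖) ≤ ⟪G, e⟫ := neg_le_of_abs_le (abs_real_inner_le_norm G e)
  have ha : Lc * η ≤ 1 / 2 := by
    have h1 := mul_le_mul_of_nonneg_left hη1 hLc.le
    rw [mul_one_div] at h1
    calc Lc * η ≤ Lc / (2 * Lc) := h1
      _ = 1 / 2 := by field_simp
  have h2s : 2 * ‖e‖ ≤ ‖G‖ := le_trans (by nlinarith [herr]) hbig
  have hcore : ‖G‖ ^ 2 / 4 ≤ ⟪G, g⟫ - Lc * η / 2 * ‖g‖ ^ 2 := by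
    have hGn : (0:ℝ) ≤ ‖G‖ := norm_nonneg G
    have hen : (0:ℝ) ≤ ‖e‖ := norm_nonneg e
    have haη : (0:ℝ) ≤ Lc * η := (mul_pos hLc hη0).le
    have h1a : (0:ℝ) ≤ 1 - Lc * η := by linarith
    have hprod1 : 0 ≤ (1 - Lc * η) * (⟪G, e⟫ + ‖G‖ * ‖e‖) :=
      mul_nonneg h1a (by linarith [hp])
    have hprod2 : 0 ≤ (‖G‖ - 2 * ‖e‖) * ((1 - Lc * η) * ‖G‖ + Lc * η / 2 * (‖G‖ / 2 + ‖e‖)) := by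
      apply mul_nonneg (by linarith)
      have h5 : 0 ≤ (1 - Lc * η) * ‖G‖ := mul_nonneg h1a hGn
      have h6 : 0 ≤ Lc * η / 2 * (‖G‖ / 2 + ‖e‖) := by positivity
      linarith
    have h3 : 0 ≤ (1/2 - Lc * η) * ‖G‖ ^ 2 := mul_nonneg (by linarith) (sq_nonneg _)
    have hid : ⟪G, g⟫ - Lc * η / 2 * ‖g‖ ^ 2 - ‖G‖ ^ 2 / 4 =
        (1 - Lc * η) * (⟪G, e⟫ + ‖G‖ * ‖e‖)
        + (‖G‖ - 2 * ‖e‖) * ((1 - Lc * η) * ‖G‖ + Lc * η / 2 * (‖G‖ / 2 + ‖e‖)) / 2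
        + ((1/2 - Lc * η) * ‖G‖ ^ 2 / 8 + ‖G‖ ^ 2 * 3 / 16) := by
      rw [hinner, hnormg]; ring
    nlinarith [sq_nonneg ‖G‖]
  have hfin : η * (‖G‖ ^ 2 / 4) ≤ η * ⟪G, g⟫ - Lc / 2 * (η * ‖g‖) ^ 2 := by
    have h7 := mul_le_mul_of_nonneg_left hcore hη0.le
    have h8 : η * (⟪G, g⟫ - Lc * η / 2 * ‖g‖ ^ 2) = η * ⟪G, g⟫ - Lc / 2 * (η * ‖g‖) ^ 2 := by
      ring
    linarith
  have h9 : η * (‖G‖ ^ 2 / 4) = η * ‖G‖ ^ 2 / 4 := by ring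
  linarith [hdesc, hfin]
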